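/- Let M, N be natural numbers with 1 ≤ N ≤ 2M ≤ 2N. Then 4MN/(2M+N) is the greatest element of the set {s ∈ ℝ : ∃ (x,y) ∈ C_DoF(M,N), s = x + y}. (This is the case N ≤ 2M ≤ 2N of the total DoF of the MIMO X-channel with asymmetric output feedback and delayed CSIT, Table I.) -/

import Mathlib

/-- Sum DoF region of the (M,M,N,N) MIMO X-channel with asymmetric output feedback
and delayed CSIT, without security constraints (Theorem 4). -/
noncomputable def CDoF (M N : ℕ) : Set (ℝ × ℝ) :=
  {p | 0 ≤ p.1 ∧ 0 ≤ p.2 ∧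
    p.1 / min (2 * (M : ℝ)) (2 * (N : ℝ)) + p.2 / min (2 * (M : ℝ)) (N : ℝ) ≤ 1 ∧
    p.1 / min (2 * (M : ℝ)) (N : ℝ) + p.2 / min (2 * (M : ℝ)) (2 * (N : ℝ)) ≤ 1}

/-- For 1 ≤ N ≤ 2M ≤ 2N, the maximal sum x + y over C_DoF(M,N)
equals 4MN/(2M+N). -/
theorem total_dof_case_mid (M N : ℕ) (hN : 1 ≤ N) (h1 : N ≤ 2 * M)
    (h2 : 2 * M ≤ 2 * N) :
    IsGreatest {s : ℝ | ∃ p ∈ CDoF M N, s = p.1 + p.2}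
      (4 * (M : ℝ) * (N : ℝ) / (2 * (M : ℝ) + (N : ℝ))) := by
  have hNpos : (0:ℝ) < N := by exact_mod_cast hN
  have hM1 : 1 ≤ M := by omega
  have hMpos : (0:ℝ) < M := by exact_mod_cast hM1
  have hMN : (N:ℝ) ≤ 2 * M := by exact_mod_cast h1
  have hmin1 : min (2*(M:ℝ)) (2*(N:ℝ)) = 2*(M:ℝ) := by
    apply min_eq_left
    have : (M:ℝ) ≤ N := by exact_mod_cast (by omega : M ≤ N)
    linarith
  have hmin2 : min (2*(M:ℝ)) (N:ℝ) = (N:ℝ) := min_eq_right hMN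
  have hsum : (0:ℝ) < 2*M + N := by linarith
  constructor
  · refine ⟨(2*M*N/(2*M+N), 2*M*N/(2*M+N)), ⟨?_, ?_, ?_, ?_⟩, by ring⟩
    · positivity
    · positivity
    · simp only [hmin1, hmin2]
      rw [div_add_div _ _ (by linarith : (2*(M:ℝ)) ≠ 0) (by linarith : (N:ℝ) ≠ 0),
        div_le_one (by positivity)]
      rw [div_mul_eq_mul_div, mul_div_assoc']
      rw [← add_div, div_le_iff₀ hsum]
      ring_nf
      exact le_refl _
    · simp only [hmin1, hmin2]
      rw [div_add_div _ _ (by linarith : (N:ℝ) ≠ 0) (by linarith : (2*(M:ℝ)) ≠ 0),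
        div_le_one (by positivity)]
      rw [div_mul_eq_mul_div, mul_div_assoc']
      rw [← add_div, div_le_iff₀ hsum]
      ring_nf
      exact le_refl _
  · rintro s ⟨p, ⟨hx, hy, hc1, hc2⟩, rfl⟩
    rw [hmin1, hmin2] at hc1 hc2
    rw [div_add_div _ _ (by linarith : (2*(M:ℝ)) ≠ 0) (by linarith : (N:ℝ) ≠ 0),
      div_le_one (by positivity)] at hc1
    rw [div_add_div _ _ (by linarith : (N:ℝ) ≠ 0) (by linarith : (2*(M:ℝ)) ≠ 0),
      div_le_one (by positivity)] at hc2
    rw [le_div_iff₀ hsum]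
    nlinarith [hc1, hc2]
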